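/- For every real x ≥ 1 and every p ∈ (0,1], one has ((x+1)/2)^(p−1)·(x−1) ≤ (x^p − 1)/p. -/

import Mathlib

open Real Set MeasureTheory

lemma convexOn_rpow_neg' {q : ℝ} (hq : -1 ≤ q) (hq0 : q ≤ 0) :
    ConvexOn ℝ (Ici (1:ℝ)) fun t : ℝ ↦ t ^ q := by
  have hint : interior (Ici (1:ℝ)) = Ioi 1 := interior_Ici
  refine convexOn_of_hasDerivWithinAt2_nonneg (convex_Ici 1)
    (f' := fun t => q * t ^ (q - 1)) (f'' := fun t => q * ((q - 1) * t ^ (q - 2)))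
    ?_ ?_ ?_ ?_
  · exact fun t ht => (Real.continuousAt_rpow_const t q
      (Or.inl (zero_lt_one.trans_le ht).ne')).continuousWithinAt
  · intro t ht
    rw [hint] at ht ⊢
    have h1 : (0:ℝ) < t := lt_trans one_pos ht
    exact (Real.hasDerivAt_rpow_const (Or.inl h1.ne')).hasDerivWithinAt
  · intro t ht
    rw [hint] at ht ⊢
    have h1 : (0:ℝ) < t := lt_trans one_pos ht
    have := ((Real.hasDerivAt_rpow_const (p := q - 1) (Or.inl h1.ne')).const_mul q)
    simpa [sub_sub, one_add_one_eq_two] using this.hasDerivWithinAt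
  · intro t ht
    rw [hint] at ht
    have h1 : (0:ℝ) < t := lt_trans one_pos ht
    have h2 : (0:ℝ) ≤ t ^ (q - 2) := (Real.rpow_pos_of_pos h1 _).le
    show 0 ≤ q * ((q - 1) * t ^ (q - 2))
    nlinarith [mul_nonneg (mul_nonneg (neg_nonneg.2 hq0) (by linarith : (0:ℝ) ≤ 1 - q)) h2]

theorem stmt0 (x p : ℝ) (hx : 1 ≤ x) (hp0 : 0 < p) (hp1 : p ≤ 1) :
    ((x + 1) / 2) ^ (p - 1) * (x - 1) ≤ (x ^ p - 1) / p := by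
  rcases eq_or_lt_of_le hx with rfl | hx1
  · simp
  have hx0 : 0 < x - 1 := by linarith
  -- Jensen for the convex function t ↦ t^(p-1) on Ici 1
  have hconv : ConvexOn ℝ (Ici (1:ℝ)) fun t : ℝ ↦ t ^ (p - 1) :=
    convexOn_rpow_neg' (by linarith) (by linarith)
  set μ : Measure ℝ := volume.restrict (Icc 1 x) with hμ
  have hμuniv : μ univ = ENNReal.ofReal (x - 1) := by
    rw [hμ, Measure.restrict_apply_univ, Real.volume_Icc]
  haveI : IsFiniteMeasure μ := ⟨by rw [hμuniv]; exact ENNReal.ofReal_lt_top⟩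
  haveI : NeZero μ := ⟨fun h => (ENNReal.ofReal_pos.2 hx0).ne'
    (by rw [← hμuniv, h]; simp)⟩
  have hcont : ContinuousOn (fun t : ℝ ↦ t ^ (p - 1)) (Ici 1) := fun t ht =>
    (Real.continuousAt_rpow_const t (p - 1) (Or.inl (zero_lt_one.trans_le ht).ne')).continuousWithinAt
  have hfs : ∀ᵐ t ∂μ, id t ∈ Ici (1:ℝ) := by
    rw [hμ]
    exact (ae_restrict_iff' measurableSet_Icc).2 (Filter.Eventually.of_forall fun t ht => ht.1)
  have hfi : Integrable (id : ℝ → ℝ) μ := by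
    rw [hμ]
    exact (continuous_id.continuousOn).integrableOn_Icc.mono_set subset_rfl
  have hgi : Integrable ((fun t : ℝ ↦ t ^ (p - 1)) ∘ id) μ := by
    rw [hμ]
    exact (hcont.mono (Icc_subset_Ici_self)).integrableOn_Icc
  have key := hconv.map_average_le hcont isClosed_Ici hfs hfi hgi
  -- compute averages
  have havg1 : ⨍ t, id t ∂μ = (x + 1) / 2 := by
    rw [average_eq, measureReal_def, hμuniv, hμ]
    have : ∫ t in Icc (1:ℝ) x, id t = ∫ t in (1:ℝ)..x, t := by
      rw [intervalIntegral.integral_of_le hx, ← integral_Icc_eq_integral_Ioc]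
      rfl
    rw [this, integral_id, ENNReal.toReal_ofReal hx0.le]
    have hx0' : x - 1 ≠ 0 := hx0.ne'
    rw [smul_eq_mul]
    field_simp
    ring
  have havg2 : ⨍ t, (id t) ^ (p - 1) ∂μ = ((x ^ p - 1) / p) / (x - 1) := by
    rw [average_eq, measureReal_def, hμuniv, hμ]
    have h1 : ∫ t in Icc (1:ℝ) x, (id t) ^ (p - 1) = ∫ t in (1:ℝ)..x, t ^ (p - 1) := by
      rw [intervalIntegral.integral_of_le hx, ← integral_Icc_eq_integral_Ioc]
      rfl
    have h2 : ∫ t in (1:ℝ)..x, t ^ (p - 1) = (x ^ p - 1) / p := by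
      rw [integral_rpow (Or.inl (by linarith))]
      rw [sub_add_cancel, Real.one_rpow]
    rw [h1, h2, ENNReal.toReal_ofReal hx0.le, smul_eq_mul]
    field_simp
  rw [havg1] at key
  have key2 : ((x + 1) / 2) ^ (p - 1) ≤ ((x ^ p - 1) / p) / (x - 1) := by
    rw [← havg2]; exact key
  calc ((x + 1) / 2) ^ (p - 1) * (x - 1) ≤ (((x ^ p - 1) / p) / (x - 1)) * (x - 1) := by
        exact mul_le_mul_of_nonneg_right key2 hx0.le
    _ = (x ^ p - 1) / p := by field_simp
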